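/- arXiv:math/0112061 — 3 statements merged into one kernel-verified Lean document; each statement's English description precedes it below -/
import Mathlib

section
/- Applying the exterior differential d (graded Leibniz rule, d even variables have parity 0 and odd ones parity 1) to the quantum superplane relations xθ - qθx = 0 and θ² = 0, with the ansatz x·dθ = F₁₁ dθ·x + F₁₂ dx·θ, θ·dx = F₂₁ dx·θ + F₂₂ dθ·x, θ·dθ = B dθ·θ, forces the coefficient conditions F₁₁ + q F₂₂ = q, F₁₂ + q F₂₁ = -1, and B = 1. -/
/- STATEMENT 0: Applying the exterior differential d (graded Leibniz rule) to the
quantum superplane relations xθ - qθx = 0 and θ² = 0, with the ansatz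
x·dθ = F₁₁ dθ·x + F₁₂ dx·θ, θ·dx = F₂₁ dx·θ + F₂₂ dθ·x, θ·dθ = B dθ·θ,
forces F₁₁ + q F₂₂ = q, F₁₂ + q F₂₁ = -1, B = 1.

We model the superplane with its first-order calculus ansatz as the quotient of the
free algebra on x = ι 0, θ = ι 1, dx = ι 2, dθ = ι 3 by the superplane relations (1)
and the ansatz relations (2).  The consequences of applying d are
d(xθ) = q·d(θx), i.e. dx·θ + x·dθ = q(dθ·x - θ·dx)  (x even, θ odd), and
d(θ·θ) = 0, i.e. dθ·θ - θ·dθ = 0. -/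

noncomputable section

open FreeAlgebra

/-- The defining relations of the quantum superplane together with the
linear ansatz for the commutation of coordinates and differentials. -/
inductive SRel (q A B F11 F12 F21 F22 : ℂ) :
    FreeAlgebra ℂ (Fin 4) → FreeAlgebra ℂ (Fin 4) → Prop
  | plane : SRel q A B F11 F12 F21 F22 (ι ℂ 0 * ι ℂ 1) (q • (ι ℂ 1 * ι ℂ 0))
  | nilp : SRel q A B F11 F12 F21 F22 (ι ℂ 1 * ι ℂ 1) 0
  | xdx : SRel q A B F11 F12 F21 F22 (ι ℂ 0 * ι ℂ 2) (A • (ι ℂ 2 * ι ℂ 0))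
  | xdth : SRel q A B F11 F12 F21 F22 (ι ℂ 0 * ι ℂ 3)
      (F11 • (ι ℂ 3 * ι ℂ 0) + F12 • (ι ℂ 2 * ι ℂ 1))
  | thdx : SRel q A B F11 F12 F21 F22 (ι ℂ 1 * ι ℂ 2)
      (F21 • (ι ℂ 2 * ι ℂ 1) + F22 • (ι ℂ 3 * ι ℂ 0))
  | thdth : SRel q A B F11 F12 F21 F22 (ι ℂ 1 * ι ℂ 3) (B • (ι ℂ 3 * ι ℂ 1))

/-- The algebra generated by x, θ, dx, dθ with the superplane and ansatz relations. -/
abbrev SPlane (q A B F11 F12 F21 F22 : ℂ) := RingQuot (SRel q A B F11 F12 F21 F22)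

/-- The canonical projection. -/
abbrev sπ (q A B F11 F12 F21 F22 : ℂ) :
    FreeAlgebra ℂ (Fin 4) →ₐ[ℂ] SPlane q A B F11 F12 F21 F22 :=
  RingQuot.mkAlgHom ℂ (SRel q A B F11 F12 F21 F22)

/-- single-entry matrix abbreviation -/
abbrev SPE (i j : Fin 11) (a : ℂ) := Matrix.single i j a

lemma SPE_mul (i j k l : Fin 11) (a b : ℂ) :
    SPE i j a * SPE k l b = if j = k then SPE i l (a * b) else 0 := by
  split
  · subst ‹j = k›; rw [Matrix.single_mul_single_same]
  · exact Matrix.single_mul_single_of_ne (c := a) (i := i) (j := j) (k := k) (h := ‹j ≠ k›) (d := b)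

/-- The representation matrices on the truncated normal-form basis
0:1, 1:x, 2:θ, 3:dx, 4:dθ, 5:x², 6:θx, 7:dx·x, 8:dx·θ, 9:dθ·x, 10:dθ·θ. -/
def sRep (q A B F11 F12 F21 F22 : ℂ) : Fin 4 → Matrix (Fin 11) (Fin 11) ℂ
  | 0 => SPE 1 0 1 + SPE 5 1 1 + SPE 6 2 q + SPE 7 3 A + SPE 9 4 F11 + SPE 8 4 F12
  | 1 => SPE 2 0 1 + SPE 6 1 1 + SPE 8 3 F21 + SPE 9 3 F22 + SPE 10 4 B
  | 2 => SPE 3 0 1 + SPE 7 1 1 + SPE 8 2 1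
  | 3 => SPE 4 0 1 + SPE 9 1 1 + SPE 10 2 1

def sRepHom (q A B F11 F12 F21 F22 : ℂ) :
    FreeAlgebra ℂ (Fin 4) →ₐ[ℂ] Matrix (Fin 11) (Fin 11) ℂ :=
  FreeAlgebra.lift ℂ (sRep q A B F11 F12 F21 F22)

lemma sRep_rel (q A B F11 F12 F21 F22 : ℂ) ⦃a b : FreeAlgebra ℂ (Fin 4)⦄
    (h : SRel q A B F11 F12 F21 F22 a b) :
    sRepHom q A B F11 F12 F21 F22 a = sRepHom q A B F11 F12 F21 F22 b := by
  cases h <;>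
    simp only [sRepHom, map_mul, map_smul, map_add, map_zero, FreeAlgebra.lift_ι_apply] <;>
    simp only [sRep, add_mul, mul_add, SPE_mul, smul_add, Matrix.smul_single,
      smul_zero, add_zero, zero_add, Fin.reduceEq, ite_true, ite_false, reduceIte,
      smul_eq_mul, one_mul, mul_one]

def sφ (q A B F11 F12 F21 F22 : ℂ) :
    SPlane q A B F11 F12 F21 F22 →ₐ[ℂ] Matrix (Fin 11) (Fin 11) ℂ :=
  RingQuot.liftAlgHom ℂ ⟨sRepHom q A B F11 F12 F21 F22, sRep_rel q A B F11 F12 F21 F22⟩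

lemma sφ_π (q A B F11 F12 F21 F22 : ℂ) (x : FreeAlgebra ℂ (Fin 4)) :
    sφ q A B F11 F12 F21 F22 (sπ q A B F11 F12 F21 F22 x) =
      sRepHom q A B F11 F12 F21 F22 x :=
  RingQuot.liftAlgHom_mkAlgHom_apply _ _ _ _

theorem forced_coefficient_conditions (q A B F11 F12 F21 F22 : ℂ) (hq : q ≠ 0)
    -- d applied to xθ = qθx : dx·θ + x·dθ = q(dθ·x − θ·dx)
    (hd1 : sπ q A B F11 F12 F21 F22 (ι ℂ 2) * sπ q A B F11 F12 F21 F22 (ι ℂ 1) +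
        sπ q A B F11 F12 F21 F22 (ι ℂ 0) * sπ q A B F11 F12 F21 F22 (ι ℂ 3) =
      q • (sπ q A B F11 F12 F21 F22 (ι ℂ 3) * sπ q A B F11 F12 F21 F22 (ι ℂ 0)) -
        q • (sπ q A B F11 F12 F21 F22 (ι ℂ 1) * sπ q A B F11 F12 F21 F22 (ι ℂ 2)))
    -- d applied to θ² = 0 : dθ·θ − θ·dθ = 0
    (hd2 : sπ q A B F11 F12 F21 F22 (ι ℂ 3) * sπ q A B F11 F12 F21 F22 (ι ℂ 1) -
        sπ q A B F11 F12 F21 F22 (ι ℂ 1) * sπ q A B F11 F12 F21 F22 (ι ℂ 3) = 0) :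
    F11 + q * F22 = q ∧ F12 + q * F21 = -1 ∧ B = 1 := by
  have h1 := congrArg (sφ q A B F11 F12 F21 F22) hd1
  have h2 := congrArg (sφ q A B F11 F12 F21 F22) hd2
  simp only [map_add, map_mul, map_sub, map_smul, map_zero, sφ_π, sRepHom,
    FreeAlgebra.lift_ι_apply] at h1 h2
  simp only [sRep, add_mul, mul_add, SPE_mul, smul_add, Matrix.smul_single,
    smul_zero, add_zero, zero_add, Fin.reduceEq, ite_true, ite_false, reduceIte,
    smul_eq_mul, one_mul, mul_one] at h1 h2
  have e8 := congrFun (congrFun h1 8) 0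
  have e9 := congrFun (congrFun h1 9) 0
  have e10 := congrFun (congrFun h2 10) 0
  simp only [Matrix.add_apply, Matrix.sub_apply, Matrix.zero_apply, SPE,
    Matrix.single, Matrix.of_apply, Fin.reduceEq, and_true, and_false,
    and_self, ite_true, ite_false, reduceIte] at e8 e9 e10
  refine ⟨?_, ?_, ?_⟩ <;> [skip; skip; skip]
  · linear_combination e9
  · linear_combination e8
  · linear_combination -e10
end
end

section
/- Define Δ̂_R on differentials by Δ̂_R(dx) = dx⊗x and Δ̂_R(dθ) = dθ⊗x + dx⊗θ, and on mixed products by φ_R(u·dv) = Δ(u)·Δ̂_R(dv). Then φ_R preserves the Family I relations: e.g., Δ(x)Δ̂_R(dx) = p Δ̂_R(dx)Δ(x) and Δ(θ)Δ̂_R(dx) = -q⁻¹ Δ̂_R(dx)Δ(θ) + (1-p) Δ̂_R(dθ)Δ(x) hold in Γ⊗A, given p = q⁻². -/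
/- STATEMENT 13: With Δ̂_R(dx) = dx⊗x, Δ̂_R(dθ) = dθ⊗x + dx⊗θ and
φ_R(u·dv) = Δ(u)·Δ̂_R(dv) (where Δ(x) = x⊗x, Δ(θ) = θ⊗x + x⊗θ), the map φ_R
preserves the Family I relations; e.g.
Δ(x)Δ̂_R(dx) = p Δ̂_R(dx)Δ(x) and
Δ(θ)Δ̂_R(dx) = -q⁻¹ Δ̂_R(dx)Δ(θ) + (1-p) Δ̂_R(dθ)Δ(x)
hold in Γ⊗A, given p = q⁻².

We realise Γ⊗A as any ℂ-algebra containing the first-leg generators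
x₁, θ₁, dx₁, dθ₁ of Γ (satisfying relations (1), (11a), (12a)), the second-leg
generators x₂, θ₂ of A (satisfying (1)), and the Koszul-sign cross relations
(x, dθ even; θ, dx odd). -/

theorem phiR_preserves_familyI (p q : ℂ) (hp : p ≠ 0) (hq : q ≠ 0) (hpq : p = q⁻¹ ^ 2)
    {T : Type*} [Ring T] [Algebra ℂ T]
    (x₁ θ₁ dx₁ dθ₁ x₂ θ₂ : T)
    -- relations of Γ in the first leg: (1)
    (g1 : x₁ * θ₁ = q • (θ₁ * x₁)) (g2 : θ₁ * θ₁ = 0)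
    -- (11a)
    (g3 : x₁ * dx₁ = p • (dx₁ * x₁))
    (g4 : x₁ * dθ₁ = (p * q) • (dθ₁ * x₁))
    (g5 : θ₁ * dx₁ = -(q⁻¹ • (dx₁ * θ₁)) + (1 - p) • (dθ₁ * x₁))
    (g6 : θ₁ * dθ₁ = dθ₁ * θ₁)
    -- (12a)
    (g7 : dx₁ * dx₁ = 0) (g8 : dx₁ * dθ₁ = (p * q) • (dθ₁ * dx₁))
    -- relations of A in the second leg: (1)
    (a1 : x₂ * θ₂ = q • (θ₂ * x₂)) (a2 : θ₂ * θ₂ = 0)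
    -- Koszul sign cross relations: x₂ (even) commutes with the first leg
    (c1 : x₂ * x₁ = x₁ * x₂) (c2 : x₂ * θ₁ = θ₁ * x₂)
    (c3 : x₂ * dx₁ = dx₁ * x₂) (c4 : x₂ * dθ₁ = dθ₁ * x₂)
    -- θ₂ (odd) commutes with even, anticommutes with odd first-leg generators
    (c5 : θ₂ * x₁ = x₁ * θ₂) (c6 : θ₂ * dθ₁ = dθ₁ * θ₂)
    (c7 : θ₂ * θ₁ = -(θ₁ * θ₂)) (c8 : θ₂ * dx₁ = -(dx₁ * θ₂)) :
    -- Δ(x)·Δ̂_R(dx) = p Δ̂_R(dx)·Δ(x)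
    (x₁ * x₂) * (dx₁ * x₂) = p • ((dx₁ * x₂) * (x₁ * x₂)) ∧
    -- Δ(θ)·Δ̂_R(dx) = -q⁻¹ Δ̂_R(dx)·Δ(θ) + (1-p) Δ̂_R(dθ)·Δ(x)
    (θ₁ * x₂ + x₁ * θ₂) * (dx₁ * x₂) =
      -(q⁻¹ • ((dx₁ * x₂) * (θ₁ * x₂ + x₁ * θ₂))) +
        (1 - p) • ((dθ₁ * x₂ + dx₁ * θ₂) * (x₁ * x₂)) := by
  have c1' : ∀ t : T, x₂ * (x₁ * t) = x₁ * (x₂ * t) := fun t => by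
    rw [← mul_assoc, c1, mul_assoc]
  have c3' : ∀ t : T, x₂ * (dx₁ * t) = dx₁ * (x₂ * t) := fun t => by
    rw [← mul_assoc, c3, mul_assoc]
  have c5' : ∀ t : T, θ₂ * (x₁ * t) = x₁ * (θ₂ * t) := fun t => by
    rw [← mul_assoc, c5, mul_assoc]
  have c8' : ∀ t : T, θ₂ * (dx₁ * t) = -(dx₁ * (θ₂ * t)) := fun t => by
    rw [← mul_assoc, c8, neg_mul, mul_assoc]
  have g3' : ∀ t : T, x₁ * (dx₁ * t) = p • (dx₁ * (x₁ * t)) := fun t => by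
    rw [← mul_assoc, g3, smul_mul_assoc, mul_assoc]
  have g5' : ∀ t : T, θ₁ * (dx₁ * t) =
      -(q⁻¹ • (dx₁ * (θ₁ * t))) + (1 - p) • (dθ₁ * (x₁ * t)) := fun t => by
    rw [← mul_assoc, g5, add_mul, neg_mul, smul_mul_assoc, smul_mul_assoc, mul_assoc, mul_assoc]
  have c2' : ∀ t : T, x₂ * (θ₁ * t) = θ₁ * (x₂ * t) := fun t => by
    rw [← mul_assoc, c2, mul_assoc]
  have a1' : ∀ t : T, x₂ * (θ₂ * t) = q • (θ₂ * (x₂ * t)) := fun t => by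
    rw [← mul_assoc, a1, smul_mul_assoc, mul_assoc]
  constructor
  · simp only [mul_assoc, c3', g3', c1', mul_smul_comm, smul_smul]

  · simp only [mul_add, add_mul, mul_assoc, smul_add, mul_smul_comm, smul_mul_assoc,
      mul_neg, neg_mul, c1', c2', c3', c5', c8', g3', g5', a1', a1, c2, smul_neg, neg_neg,
      smul_smul, neg_add_rev]
    match_scalars <;> (field_simp; try ring)
end

section
/- In the Family I calculus, the forms w = dx·x⁻¹ and u = dθ·x⁻¹ - dx·x⁻¹θx⁻¹ satisfy w² = 0 and wu = uw. -/
/- STATEMENT 18: In the Family I calculus on the extended quantum superplane, the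
forms w = dx·x⁻¹ and u = dθ·x⁻¹ - dx·x⁻¹θx⁻¹ satisfy w² = 0 and wu = uw. -/

theorem cartan_forms_relations (p q : ℂ) (hp : p ≠ 0) (hq : q ≠ 0)
    {Γ : Type*} [Ring Γ] [Algebra ℂ Γ]
    (x xinv θ dx dθ : Γ)
    (hx1 : x * xinv = 1) (hx2 : xinv * x = 1)
    -- quantum superplane relations (1)
    (r1 : x * θ = q • (θ * x)) (r2 : θ * θ = 0)
    -- Family I relations (11a)
    (r3 : x * dx = p • (dx * x))
    (r4 : x * dθ = (p * q) • (dθ * x))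
    (r5 : θ * dx = -(q⁻¹ • (dx * θ)) + (1 - p) • (dθ * x))
    (r6 : θ * dθ = dθ * θ)
    -- Family I relations (12a)
    (r7 : dx * dx = 0) (r8 : dx * dθ = (p * q) • (dθ * dx)) :
    (dx * xinv) * (dx * xinv) = 0 ∧
    (dx * xinv) * (dθ * xinv - dx * xinv * θ * xinv) =
      (dθ * xinv - dx * xinv * θ * xinv) * (dx * xinv) := by
  have hpq : p * q ≠ 0 := mul_ne_zero hp hq
  have key : ∀ a : Γ, ∀ c : ℂ, c ≠ 0 → x * a = c • (a * x) → xinv * a = c⁻¹ • (a * xinv) := by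
    intro a c hc h
    have h2 : a * xinv = c • (xinv * a) := by
      calc a * xinv = xinv * (x * a) * xinv := by rw [← mul_assoc, hx2, one_mul]
        _ = xinv * (c • (a * x)) * xinv := by rw [h]
        _ = c • (xinv * (a * (x * xinv))) := by
            simp only [mul_smul_comm, smul_mul_assoc, mul_assoc]
        _ = c • (xinv * a) := by rw [hx1, mul_one]
    have h3 := congrArg (fun t => c⁻¹ • t) h2
    simpa [smul_smul, inv_mul_cancel₀ hc] using h3.symm
  have c1 : xinv * dx = p⁻¹ • (dx * xinv) := key dx p hp r3
  have c2 : xinv * dθ = (p * q)⁻¹ • (dθ * xinv) := key dθ (p*q) hpq r4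
  have c3 : xinv * θ = q⁻¹ • (θ * xinv) := key θ q hq r1
  have hw2 : (dx * xinv) * (dx * xinv) = 0 := by
    calc (dx * xinv) * (dx * xinv) = dx * (xinv * dx) * xinv := by
          simp only [mul_assoc]
      _ = p⁻¹ • (dx * (dx * (xinv * xinv))) := by
          rw [c1]; simp only [mul_smul_comm, smul_mul_assoc, mul_assoc]
      _ = 0 := by rw [← mul_assoc dx dx, r7, zero_mul, smul_zero]
  refine ⟨hw2, ?_⟩
  have lhs1 : dx * xinv * (dθ * xinv) = dθ * (dx * (xinv * xinv)) := by
    calc dx * xinv * (dθ * xinv) = dx * (xinv * dθ) * xinv := by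
          simp only [mul_assoc]
      _ = (p*q)⁻¹ • (dx * dθ * (xinv * xinv)) := by
          rw [c2]; simp only [mul_smul_comm, smul_mul_assoc, mul_assoc]
      _ = ((p*q)⁻¹ * (p*q)) • (dθ * dx * (xinv * xinv)) := by
          rw [r8, smul_mul_assoc, smul_smul]
      _ = dθ * (dx * (xinv * xinv)) := by
          rw [inv_mul_cancel₀ hpq, one_smul, mul_assoc]
  have lhs2 : dx * xinv * (dx * xinv * θ * xinv) = 0 := by
    rw [show dx * xinv * (dx * xinv * θ * xinv) = (dx * xinv * (dx * xinv)) * (θ * xinv) by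
      simp only [mul_assoc], hw2, zero_mul]
  have rhs1 : dθ * xinv * (dx * xinv) = p⁻¹ • (dθ * (dx * (xinv * xinv))) := by
    calc dθ * xinv * (dx * xinv) = dθ * (xinv * dx) * xinv := by
          simp only [mul_assoc]
      _ = p⁻¹ • (dθ * (dx * (xinv * xinv))) := by
          rw [c1]; simp only [mul_smul_comm, smul_mul_assoc, mul_assoc]
  have hdxθdx : dx * (θ * dx) = ((1-p) * (p*q)) • (dθ * (dx * x)) := by
    rw [r5, mul_add, mul_neg, mul_smul_comm, ← mul_assoc, r7, zero_mul, smul_zero, neg_zero,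
      zero_add, mul_smul_comm, ← mul_assoc, r8]
    simp only [smul_mul_assoc, smul_smul, mul_assoc]
  have rhs2 : dx * xinv * θ * xinv * (dx * xinv) =
      (p⁻¹ * (1 - p)) • (dθ * (dx * (xinv * xinv))) := by
    calc dx * xinv * θ * xinv * (dx * xinv)
        = dx * ((xinv * θ) * ((xinv * dx) * xinv)) := by simp only [mul_assoc]
      _ = (q⁻¹ * p⁻¹) • (dx * (θ * (xinv * (dx * (xinv * xinv))))) := by
          rw [c3, c1]; simp only [mul_smul_comm, smul_mul_assoc, smul_smul, mul_assoc]
          congr 1; ring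
      _ = (q⁻¹ * p⁻¹ * p⁻¹) • (dx * (θ * dx) * (xinv * (xinv * xinv))) := by
          rw [show xinv * (dx * (xinv * xinv)) = (xinv * dx) * (xinv * xinv) from
            (mul_assoc _ _ _).symm, c1]
          simp only [mul_smul_comm, smul_mul_assoc, smul_smul, mul_assoc]
      _ = (q⁻¹ * p⁻¹ * p⁻¹ * ((1-p) * (p*q))) •
            (dθ * (dx * (x * (xinv * (xinv * xinv))))) := by
          rw [hdxθdx]; simp only [mul_smul_comm, smul_mul_assoc, smul_smul, mul_assoc]
      _ = (p⁻¹ * (1 - p)) • (dθ * (dx * (xinv * xinv))) := by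
          rw [show x * (xinv * (xinv * xinv)) = xinv * xinv by
            rw [← mul_assoc, hx1, one_mul]]
          congr 1
          field_simp
  calc dx * xinv * (dθ * xinv - dx * xinv * θ * xinv)
      = dx * xinv * (dθ * xinv) - dx * xinv * (dx * xinv * θ * xinv) := by rw [mul_sub]
    _ = dθ * (dx * (xinv * xinv)) := by rw [lhs1, lhs2, sub_zero]
    _ = p⁻¹ • (dθ * (dx * (xinv * xinv))) - (p⁻¹ * (1 - p)) • (dθ * (dx * (xinv * xinv))) := by
        rw [← sub_smul, show p⁻¹ - p⁻¹ * (1-p) = 1 by field_simp; ring, one_smul]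
    _ = (dθ * xinv - dx * xinv * θ * xinv) * (dx * xinv) := by
        rw [sub_mul, rhs1, rhs2]
end
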